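/- For every complex positive semidefinite 2n×2n matrix P there exists a Gaussian channel (X,Y) with i(XσXᵀ − σ) + Y = P; moreover p(X,Y) := i(XσXᵀ − σ) + Y is positive semidefinite if and only if (X,Y) satisfies the CP condition, and p(X,Y) = 0 if and only if X is symplectic and Y = 0. -/

import Mathlib

open Matrix Complex
open scoped ComplexOrder

noncomputable section

/-- Index set for `2n × 2n` matrices, grouped as `n` pairs of modes. -/
abbrev Idx (n : ℕ) := Fin n × Fin 2

abbrev Mat (n : ℕ) := Matrix (Idx n) (Idx n) ℝ

/-- The elementary symplectic form `[[0,1],[-1,0]]`. -/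
def sigma1 : Matrix (Fin 2) (Fin 2) ℝ := !![0, 1; -1, 0]

/-- The standard symplectic form: block-diagonal with `n` copies of `sigma1`. -/
def symp (n : ℕ) : Mat n :=
  Matrix.kroneckerMap (· * ·) (1 : Matrix (Fin n) (Fin n) ℝ) sigma1

/-- Complexification of a real matrix. -/
def toC {m : Type*} (M : Matrix m m ℝ) : Matrix m m ℂ := M.map Complex.ofReal

/-- The complete positivity condition `Y ≥ i (σ - X σ Xᵀ)` for a Gaussian channel `(X, Y)`. -/
def IsGaussian {n : ℕ} (X Y : Mat n) : Prop :=
  (toC Y - Complex.I • toC (symp n - X * symp n * Xᵀ)).PosSemidef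

/-- The semigroup product of Gaussian channels. -/
def gProd {n : ℕ} (p q : Mat n × Mat n) : Mat n × Mat n :=
  (p.1 * q.1, p.2 + p.1 * q.2 * p.1ᵀ)

/-- The map from Gaussian channels to complex positive matrices. -/
def pMap {n : ℕ} (X Y : Mat n) : Matrix (Idx n) (Idx n) ℂ :=
  Complex.I • toC (X * symp n * Xᵀ - symp n) + toC Y

section Skew
open Matrix Module

variable {m : Type*} [Fintype m] [DecidableEq m]

lemma vecMulVec_mulVec (a b x : m → ℝ) : (vecMulVec a b) *ᵥ x = (b ⬝ᵥ x) • a := by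
  ext i
  simp only [vecMulVec, mulVec, dotProduct, of_apply, Pi.smul_apply, smul_eq_mul,
    Finset.sum_mul]
  exact Finset.sum_congr rfl fun j _ => by ring

omit [Fintype m] [DecidableEq m] in
lemma vecMulVec_transpose' (a b : m → ℝ) : (vecMulVec a b)ᵀ = vecMulVec b a := by
  ext i j; simp [vecMulVec, mul_comm]

lemma vecMul_skew {B : Matrix m m ℝ} (hB : Bᵀ = -B) (x : m → ℝ) :
    x ᵥ* B = -(B *ᵥ x) := by
  have h := vecMul_transpose B x
  rw [hB, Matrix.vecMul_neg] at h
  exact neg_eq_iff_eq_neg.mp h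

lemma skew_dot_self {B : Matrix m m ℝ} (hB : Bᵀ = -B) (x : m → ℝ) : x ⬝ᵥ B *ᵥ x = 0 := by
  have h := dotProduct_mulVec x B x
  rw [vecMul_skew hB, neg_dotProduct, dotProduct_comm (B *ᵥ x) x] at h
  linarith

lemma skew_dot_swap {B : Matrix m m ℝ} (hB : Bᵀ = -B) (x y : m → ℝ) :
    y ⬝ᵥ B *ᵥ x = -(x ⬝ᵥ B *ᵥ y) := by
  have h := dotProduct_mulVec y B x
  rw [vecMul_skew hB, neg_dotProduct, dotProduct_comm (B *ᵥ y) x] at h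
  exact h

lemma rank_eq_zero_iff' (B : Matrix m m ℝ) : B.rank = 0 ↔ B = 0 := by
  constructor
  · intro h
    have : LinearMap.range B.mulVecLin = ⊥ := by
      rw [← Submodule.finrank_eq_zero]; exact h
    have h0 : B.mulVecLin = 0 := LinearMap.range_eq_bot.mp this
    ext i j
    have := congrFun (congrFun (congrArg DFunLike.coe h0) (Pi.single j 1)) i
    simpa [Matrix.mulVecLin, mulVec_single] using this
  · rintro rfl; simp

theorem skew_decomp : ∀ (k : ℕ) (B : Matrix m m ℝ), Bᵀ = -B → B.rank ≤ 2 * k →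
    ∃ a b : Fin k → m → ℝ,
      B = ∑ i, (vecMulVec (a i) (b i) - vecMulVec (b i) (a i)) := by
  intro k
  induction k with
  | zero =>
    intro B hB hr
    refine ⟨0, 0, ?_⟩
    simp at hr
    rw [(rank_eq_zero_iff' B).mp hr]
    simp
  | succ k ih =>
    intro B hB hr
    by_cases h0 : B = 0
    · refine ⟨0, 0, ?_⟩; simp [h0]
    · obtain ⟨p, q, hpq⟩ : ∃ p q, B p q ≠ 0 := by
        by_contra h; push_neg at h; exact h0 (by ext i j; simpa using h i j)
      set u : m → ℝ := fun i => (B p q)⁻¹ * ((Pi.single p 1 : m → ℝ) i) with hu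
      set v : m → ℝ := Pi.single q 1 with hv
      have huv : u ⬝ᵥ B *ᵥ v = 1 := by
        simp only [hu, hv, dotProduct, mulVec_single]
        rw [Finset.sum_eq_single p]
        · simp [inv_mul_cancel₀ hpq]
        · intro i _ hip; simp [Pi.single_apply, hip]
        · intro h; exact absurd (Finset.mem_univ p) h
      set f : m → ℝ := B *ᵥ v with hf
      set g : m → ℝ := B *ᵥ u with hg
      have hfu : f ⬝ᵥ u = 1 := by rw [dotProduct_comm]; exact huv
      have hgu : g ⬝ᵥ u = 0 := by rw [dotProduct_comm]; exact skew_dot_self hB u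
      have hfv : f ⬝ᵥ v = 0 := by rw [dotProduct_comm]; exact skew_dot_self hB v
      have hgv : g ⬝ᵥ v = -1 := by
        rw [dotProduct_comm, hg, skew_dot_swap hB u v, huv]
      set E : Matrix m m ℝ := vecMulVec g f - vecMulVec f g with hE
      set B' : Matrix m m ℝ := B - E with hB'
      have hB'skew : B'ᵀ = -B' := by
        rw [hB', hE, transpose_sub, transpose_sub, hB, vecMulVec_transpose', vecMulVec_transpose']
        abel
      have hrank : B'.rank ≤ 2 * k := by
        classical
        set V := LinearMap.range B.mulVecLin with hV
        have hfV : f ∈ V := ⟨v, (mulVecLin_apply B v)⟩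
        have hgV : g ∈ V := ⟨u, (mulVecLin_apply B u)⟩
        set ψ : (m → ℝ) →ₗ[ℝ] ℝ × ℝ :=
          { toFun := fun y => (u ⬝ᵥ y, v ⬝ᵥ y)
            map_add' := by intro y z; simp [dotProduct_add, Prod.ext_iff]
            map_smul' := by intro c y; simp [dotProduct_smul, Prod.ext_iff] } with hψ
        set φ : V →ₗ[ℝ] ℝ × ℝ := ψ ∘ₗ V.subtype with hφ
        have hφf : φ ⟨f, hfV⟩ = (1, 0) := by
          simp [hφ, hψ, dotProduct_comm u f, dotProduct_comm v f, hfu, hfv]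
        have hφg : φ ⟨g, hgV⟩ = (0, -1) := by
          simp [hφ, hψ, dotProduct_comm u g, dotProduct_comm v g, hgu, hgv]
        have hsurj : LinearMap.range φ = ⊤ := by
          rw [Submodule.eq_top_iff']
          rintro ⟨s, t⟩
          have : (s, t) = s • φ ⟨f, hfV⟩ + (-t) • φ ⟨g, hgV⟩ := by
            rw [hφf, hφg]; simp [Prod.ext_iff]
          rw [this]
          exact Submodule.add_mem _ (Submodule.smul_mem _ _ (LinearMap.mem_range_self φ _))
            (Submodule.smul_mem _ _ (LinearMap.mem_range_self φ _))
        have hrn := LinearMap.finrank_range_add_finrank_ker φ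
        rw [hsurj] at hrn
        have h2 : Module.finrank ℝ (⊤ : Submodule ℝ (ℝ × ℝ)) = 2 := by
          rw [finrank_top]
          simp [Module.finrank_prod]
        rw [h2] at hrn
        have hVrank : Module.finrank ℝ V = B.rank := rfl
        have hker : Module.finrank ℝ (LinearMap.ker φ) ≤ 2 * k := by
          rw [hVrank] at hrn
          omega
        have hle : LinearMap.range B'.mulVecLin ≤
            Submodule.map V.subtype (LinearMap.ker φ) := by
          rintro y ⟨x, rfl⟩
          rw [mulVecLin_apply]
          have hEx : E *ᵥ x = (f ⬝ᵥ x) • g - (g ⬝ᵥ x) • f := by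
            rw [hE, Matrix.sub_mulVec, _root_.vecMulVec_mulVec, _root_.vecMulVec_mulVec]
          have hBx : B' *ᵥ x = B *ᵥ x - ((f ⬝ᵥ x) • g - (g ⬝ᵥ x) • f) := by
            rw [hB', Matrix.sub_mulVec, hEx]
          have hyV : B' *ᵥ x ∈ V := by
            rw [hBx]
            exact Submodule.sub_mem _ ⟨x, mulVecLin_apply B x⟩
              (Submodule.sub_mem _ (Submodule.smul_mem _ _ hgV) (Submodule.smul_mem _ _ hfV))
          refine Submodule.mem_map.mpr ⟨⟨B' *ᵥ x, hyV⟩, LinearMap.mem_ker.mpr ?_, rfl⟩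
          have hug : u ⬝ᵥ B *ᵥ x = -(g ⬝ᵥ x) := by
            rw [hg, skew_dot_swap hB x u]
            rw [dotProduct_comm]
          have hvf : v ⬝ᵥ B *ᵥ x = -(f ⬝ᵥ x) := by
            rw [hf, skew_dot_swap hB x v]
            rw [dotProduct_comm]
          have e1 : u ⬝ᵥ B' *ᵥ x = 0 := by
            rw [hBx, dotProduct_sub, dotProduct_sub, dotProduct_smul, dotProduct_smul,
              hug, dotProduct_comm u g, dotProduct_comm u f, hgu, hfu]
            simp
          have e2 : v ⬝ᵥ B' *ᵥ x = 0 := by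
            rw [hBx, dotProduct_sub, dotProduct_sub, dotProduct_smul, dotProduct_smul,
              hvf, dotProduct_comm v g, dotProduct_comm v f, hgv, hfv]
            simp
          simp only [hφ, hψ, LinearMap.comp_apply, Submodule.subtype_apply,
            LinearMap.coe_mk, AddHom.coe_mk]
          rw [Prod.ext_iff]
          exact ⟨e1, e2⟩
        calc B'.rank ≤ Module.finrank ℝ (Submodule.map V.subtype (LinearMap.ker φ)) :=
              Submodule.finrank_mono hle
          _ = Module.finrank ℝ (LinearMap.ker φ) := Submodule.finrank_map_subtype_eq _ _
          _ ≤ 2 * k := hker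
      obtain ⟨a, b, hab⟩ := ih B' hB'skew hrank
      refine ⟨Fin.cons g a, Fin.cons f b, ?_⟩
      rw [Fin.sum_univ_succ]
      simp only [Fin.cons_zero, Fin.cons_succ]
      rw [← hab, hB', hE]
      abel

end Skew

/-- `pMap` agrees with the matrix in `IsGaussian`. -/
lemma pMap_eq_gaussian_matrix {n : ℕ} (X Y : Mat n) :
    pMap X Y = toC Y - Complex.I • toC (symp n - X * symp n * Xᵀ) := by
  ext p q
  simp only [pMap, toC, Matrix.add_apply, Matrix.sub_apply, Matrix.smul_apply,
    Matrix.map_apply, smul_eq_mul]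
  push_cast
  ring

/-- Construct `X` from the pair decomposition. -/
lemma exists_X_of_skew {n : ℕ} (B : Mat n) (hB : Bᵀ = -B) :
    ∃ X : Mat n, X * symp n * Xᵀ = B := by
  have hcard : Fintype.card (Idx n) = 2 * n := by
    simp [Fintype.card_prod, mul_comm]
  have hrank : B.rank ≤ 2 * n := by
    have := B.rank_le_card_width
    rwa [hcard] at this
  obtain ⟨a, b, hab⟩ := skew_decomp n B hB hrank
  refine ⟨Matrix.of fun p ki => if ki.2 = 0 then a ki.1 p else b ki.1 p, ?_⟩
  rw [hab]
  ext p r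
  simp only [Matrix.mul_apply, Matrix.transpose_apply, symp, Matrix.kroneckerMap_apply,
    sigma1, Matrix.sum_apply, Matrix.sub_apply, Matrix.vecMulVec_apply, Matrix.of_apply]
  have s00 : (!![0, 1; -1, 0] : Matrix (Fin 2) (Fin 2) ℝ) 0 0 = 0 := by norm_num
  have s01 : (!![0, 1; -1, 0] : Matrix (Fin 2) (Fin 2) ℝ) 0 1 = 1 := by norm_num
  have s10 : (!![0, 1; -1, 0] : Matrix (Fin 2) (Fin 2) ℝ) 1 0 = -1 := by norm_num
  have s11 : (!![0, 1; -1, 0] : Matrix (Fin 2) (Fin 2) ℝ) 1 1 = 0 := by norm_num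
  have f10 : (1 : Fin 2) ≠ 0 := by decide
  simp only [Fintype.sum_prod_type, Fin.sum_univ_two, Matrix.one_apply,
    s00, s01, s10, s11, f10, if_true, if_false,
    mul_zero, mul_one, zero_mul, one_mul, mul_ite, ite_mul, mul_neg, neg_mul,
    Finset.sum_ite_eq, Finset.sum_ite_eq', Finset.mem_univ,
    add_zero, zero_add, mul_neg_one]
  refine Finset.sum_congr rfl fun l _ => ?_
  simp only [Finset.sum_add_distrib, Finset.sum_ite_eq', Finset.mem_univ, if_true,
    ite_self, Finset.sum_const_zero, add_zero, zero_add]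
  simp
  ring

theorem pMap_properties (n : ℕ) :
    (∀ P : Matrix (Idx n) (Idx n) ℂ, P.PosSemidef →
      ∃ X Y : Mat n, IsGaussian X Y ∧ pMap X Y = P) ∧
    (∀ X Y : Mat n, (pMap X Y).PosSemidef ↔ IsGaussian X Y) ∧
    (∀ X Y : Mat n, pMap X Y = 0 ↔ X * symp n * Xᵀ = symp n ∧ Y = 0) := by
  have sympT : (symp n)ᵀ = -(symp n) := by
    ext ⟨k, i⟩ ⟨l, j⟩
    simp only [symp, Matrix.transpose_apply, Matrix.kroneckerMap_apply, Matrix.neg_apply,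
      sigma1, Matrix.one_apply]
    fin_cases i <;> fin_cases j <;>
      simp [eq_comm] <;> by_cases h : k = l <;> simp [h, eq_comm]
  refine ⟨?_, ?_, ?_⟩
  · -- surjectivity onto PSD matrices
    intro P hP
    have hH := hP.isHermitian
    set Y : Mat n := fun p q => (P p q).re with hY
    set Bim : Mat n := fun p q => (P p q).im with hBim
    have hskew : (Bim + symp n)ᵀ = -(Bim + symp n) := by
      rw [Matrix.transpose_add, sympT]
      have : Bimᵀ = -Bim := by
        ext p q
        have := hH.apply q p
        simp only [Matrix.transpose_apply, Matrix.neg_apply, hBim]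
        show (P q p).im = -(P p q).im
        rw [← this]
        simp
      rw [this]; abel
    obtain ⟨X, hX⟩ := exists_X_of_skew (Bim + symp n) hskew
    have hX' : X * symp n * Xᵀ - symp n = Bim := by rw [hX]; exact add_sub_cancel_right _ _
    have hpm : pMap X Y = P := by
      ext p q
      simp only [pMap, hX', toC, Matrix.add_apply, Matrix.smul_apply, Matrix.map_apply,
        smul_eq_mul, hY, hBim]
      show I * ((P p q).im : ℂ) + ((P p q).re : ℂ) = P p q
      conv_rhs => rw [← Complex.re_add_im (P p q)]
      ring
    refine ⟨X, Y, ?_, hpm⟩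
    rw [IsGaussian, ← pMap_eq_gaussian_matrix, hpm]
    exact hP
  · intro X Y
    rw [IsGaussian, ← pMap_eq_gaussian_matrix]
  · intro X Y
    constructor
    · intro h
      have hent : ∀ p q, ((X * symp n * Xᵀ - symp n) p q : ℂ) * Complex.I
          + ((Y p q : ℝ) : ℂ) = 0 := by
        intro p q
        have := congrFun (congrFun (congrArg (fun M => (M : Matrix (Idx n) (Idx n) ℂ)) h) p) q
        simpa [pMap, toC, mul_comm] using this
      constructor
      · rw [← sub_eq_zero]
        ext p q
        have := congrArg Complex.im (hent p q)
        simpa using this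
      · ext p q
        have := congrArg Complex.re (hent p q)
        simpa using this
    · rintro ⟨h1, h2⟩
      simp [pMap, h1, h2, toC]
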